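/- Let n ≥ 1 be an integer, let ε₁, ε₂ ∈ {−1, +1}, and let A and B be multisets of positive integers, each of cardinality n. If the power series ε₁ · ∏_{w ∈ A} g_w + ε₂ · ∏_{w ∈ B} g_w in ℚ⟦X⟧ is constant, then ε₂ = −ε₁, A = B as multisets, and the constant is 0. -/

import Mathlib

/-- `g w = 1 + 2 ∑_{j ≥ 1} X^{jw}` in `ℚ⟦X⟧`. -/
noncomputable def g (w : ℕ) : PowerSeries ℚ :=
  PowerSeries.mk fun n => if n = 0 then 1 else if w ∣ n then 2 else 0

open PowerSeries

lemma coeff_g (w k : ℕ) :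
    (PowerSeries.coeff k) (g w) = if k = 0 then 1 else if w ∣ k then 2 else 0 := by
  simp [g]

lemma constantCoeff_prod (A : Multiset ℕ) :
    PowerSeries.constantCoeff ((A.map g).prod) = 1 := by
  induction A using Multiset.induction with
  | empty => simp
  | cons a s ih =>
      simp only [Multiset.map_cons, Multiset.prod_cons, map_mul, ih, mul_one]
      have := coeff_g a 0
      simpa [PowerSeries.coeff_zero_eq_constantCoeff] using this

lemma coeff_prod_lt (A : Multiset ℕ) (m k : ℕ) (hle : ∀ x ∈ A, m ≤ x)
    (hk0 : 0 < k) (hkm : k < m) :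
    (PowerSeries.coeff k) ((A.map g).prod) = 0 := by
  induction A using Multiset.induction with
  | empty => simp [PowerSeries.coeff_one, show ¬ k = 0 by omega]
  | cons a s ih =>
      have ha : m ≤ a := hle a (Multiset.mem_cons_self a s)
      have hle' : ∀ x ∈ s, m ≤ x := fun x hx => hle x (Multiset.mem_cons_of_mem hx)
      simp only [Multiset.map_cons, Multiset.prod_cons]
      rw [PowerSeries.coeff_mul]
      apply Finset.sum_eq_zero
      rintro ⟨i, j⟩ hij
      rw [Finset.HasAntidiagonal.mem_antidiagonal] at hij
      rcases Nat.eq_zero_or_pos i with hi | hi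
      · subst hi
        simp only [zero_add] at hij
        subst hij
        rw [ih hle', mul_zero]
      · have hia : ¬ a ∣ i := by
          intro hd
          have := Nat.le_of_dvd hi hd
          omega
        rw [coeff_g]
        simp [show ¬ i = 0 by omega, hia]

lemma coeff_prod_min (A : Multiset ℕ) (m : ℕ) (hm : 0 < m) (hle : ∀ x ∈ A, m ≤ x) :
    (PowerSeries.coeff m) ((A.map g).prod) = 2 * (A.count m : ℚ) := by
  induction A using Multiset.induction with
  | empty => simp [PowerSeries.coeff_one, show ¬ m = 0 by omega]
  | cons a s ih =>
      have ha : m ≤ a := hle a (Multiset.mem_cons_self a s)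
      have hle' : ∀ x ∈ s, m ≤ x := fun x hx => hle x (Multiset.mem_cons_of_mem hx)
      simp only [Multiset.map_cons, Multiset.prod_cons]
      rw [PowerSeries.coeff_mul]
      rw [Finset.sum_eq_add (0, m) (m, 0) (by simp; omega)]
      · have h1 : (PowerSeries.coeff 0) (g a) = 1 := by simp [coeff_g]
        have h2 : (PowerSeries.coeff 0) ((s.map g).prod) = 1 := by
          rw [PowerSeries.coeff_zero_eq_constantCoeff]; exact constantCoeff_prod s
        have h3 : (PowerSeries.coeff m) (g a) = if a = m then 2 else 0 := by
          rw [coeff_g]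
          have : a ∣ m ↔ a = m := by
            constructor
            · intro hd; have := Nat.le_of_dvd hm hd; omega
            · rintro rfl; exact dvd_rfl
          simp [show ¬ m = 0 by omega, this]
        rw [h1, h2, h3, ih hle', one_mul, mul_one]
        rw [Multiset.count_cons]
        by_cases hma : a = m
        · simp [hma, Multiset.count_cons]; push_cast; ring
        · have : ¬ m = a := fun h => hma h.symm
          simp [hma, this]
      · rintro ⟨i, j⟩ hij ⟨h1, h2⟩
        rw [Finset.HasAntidiagonal.mem_antidiagonal] at hij
        have hi : 0 < i := by
          rcases Nat.eq_zero_or_pos i with h | h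
          · exfalso; apply h1; subst h; simp at hij ⊢; omega
          · exact h
        have him : i < m := by
          rcases lt_or_ge i m with h | h
          · exact h
          · exfalso; apply h2
            have : i = m := by omega
            subst this; simp at hij ⊢; omega
        have hia : ¬ a ∣ i := by
          intro hd
          have := Nat.le_of_dvd hi hd
          omega
        rw [coeff_g]
        simp [show ¬ i = 0 by omega, hia]
      · intro hmem
        exact absurd (Finset.HasAntidiagonal.mem_antidiagonal.mpr (by omega)) hmem
      · intro hmem
        exact absurd (Finset.HasAntidiagonal.mem_antidiagonal.mpr (by omega)) hmem

lemma g_ne_zero (w : ℕ) : g w ≠ 0 := by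
  intro h
  have := coeff_g w 0
  rw [h] at this
  simp at this

/-- Injectivity of `A ↦ ∏ g`. -/
lemma prod_g_inj : ∀ (A B : Multiset ℕ), (∀ x ∈ A, 0 < x) → (∀ x ∈ B, 0 < x) →
    (A.map g).prod = (B.map g).prod → A = B := by
  intro A
  induction A using Multiset.strongInductionOn with
  | ih A IH =>
    intro B hA hB h
    by_cases hAB : A + B = 0
    · have hc := congrArg Multiset.card hAB
      rw [Multiset.card_add] at hc
      simp only [Multiset.card_zero] at hc
      have hA0 : A = 0 := by rw [← Multiset.card_eq_zero]; omega
      have hB0 : B = 0 := by rw [← Multiset.card_eq_zero]; omega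
      exact hA0.trans hB0.symm
    · -- take the minimum element of A + B
      have hex : ∃ k, k ∈ A + B := by
        rcases Multiset.exists_mem_of_ne_zero hAB with ⟨k, hk⟩
        exact ⟨k, hk⟩
      let m := Nat.find hex
      have hmmem : m ∈ A + B := Nat.find_spec hex
      have hmin : ∀ x ∈ A + B, m ≤ x := by
        intro x hx
        by_contra hc
        exact Nat.find_min hex (by omega) hx
      have hm0 : 0 < m := by
        rw [Multiset.mem_add] at hmmem
        rcases hmmem with h' | h'
        · exact hA m h'
        · exact hB m h'
      have hminA : ∀ x ∈ A, m ≤ x := fun x hx => hmin x (Multiset.mem_add.mpr (Or.inl hx))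
      have hminB : ∀ x ∈ B, m ≤ x := fun x hx => hmin x (Multiset.mem_add.mpr (Or.inr hx))
      have hcoeff := congrArg (PowerSeries.coeff m) h
      rw [coeff_prod_min A m hm0 hminA, coeff_prod_min B m hm0 hminB] at hcoeff
      have hcount : A.count m = B.count m := by
        field_simp at hcoeff
        exact_mod_cast hcoeff
      have hsum : 0 < A.count m + B.count m := by
        have := Multiset.count_pos.mpr hmmem
        rwa [Multiset.count_add] at this
      have hmA : m ∈ A := by
        rw [← Multiset.count_pos]; omega
      have hmB : m ∈ B := by
        rw [← Multiset.count_pos]; omega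
      -- cancel g m
      have hAdec : ((A.erase m).map g).prod * g m = ((B.erase m).map g).prod * g m := by
        have h1 : A = m ::ₘ A.erase m := (Multiset.cons_erase hmA).symm
        have h2 : B = m ::ₘ B.erase m := (Multiset.cons_erase hmB).symm
        rw [h1, h2] at h
        simp only [Multiset.map_cons, Multiset.prod_cons] at h
        linear_combination h
      have hcancel : ((A.erase m).map g).prod = ((B.erase m).map g).prod :=
        mul_right_cancel₀ (g_ne_zero m) hAdec
      have hlt : A.erase m < A := Multiset.erase_lt.mpr hmA
      have hrec := IH (A.erase m) hlt (B.erase m)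
        (fun x hx => hA x (Multiset.mem_of_mem_erase hx))
        (fun x hx => hB x (Multiset.mem_of_mem_erase hx)) hcancel
      calc A = m ::ₘ A.erase m := (Multiset.cons_erase hmA).symm
        _ = m ::ₘ B.erase m := by rw [hrec]
        _ = B := Multiset.cons_erase hmB

theorem stmt_2 (n : ℕ) (hn : 1 ≤ n) (ε₁ ε₂ : ℤ)
    (hε₁ : ε₁ = 1 ∨ ε₁ = -1) (hε₂ : ε₂ = 1 ∨ ε₂ = -1)
    (A B : Multiset ℕ) (hA : ∀ x ∈ A, 0 < x) (hB : ∀ x ∈ B, 0 < x)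
    (hAcard : Multiset.card A = n) (hBcard : Multiset.card B = n)
    (C : ℚ)
    (h : (ε₁ : ℚ) • (A.map g).prod + (ε₂ : ℚ) • (B.map g).prod = PowerSeries.C C) :
    ε₂ = -ε₁ ∧ A = B ∧ C = 0 := by
  -- A is nonempty
  have hAne : A ≠ 0 := by
    intro h0
    rw [h0] at hAcard
    simp at hAcard
    omega
  -- first: rule out ε₂ = ε₁
  have hne : ε₂ = -ε₁ := by
    by_contra hc
    have heq : ε₂ = ε₁ := by rcases hε₁ with h1 | h1 <;> rcases hε₂ with h2 | h2 <;> omega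
    -- minimal element of A + B
    have hex : ∃ k, k ∈ A + B := by
      rcases Multiset.exists_mem_of_ne_zero hAne with ⟨k, hk⟩
      exact ⟨k, Multiset.mem_add.mpr (Or.inl hk)⟩
    let m := Nat.find hex
    have hmmem : m ∈ A + B := Nat.find_spec hex
    have hmin : ∀ x ∈ A + B, m ≤ x := by
      intro x hx
      by_contra hcc
      exact Nat.find_min hex (by omega) hx
    have hm0 : 0 < m := by
      rw [Multiset.mem_add] at hmmem
      rcases hmmem with h' | h'
      · exact hA m h'
      · exact hB m h'
    have hminA : ∀ x ∈ A, m ≤ x := fun x hx => hmin x (Multiset.mem_add.mpr (Or.inl hx))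
    have hminB : ∀ x ∈ B, m ≤ x := fun x hx => hmin x (Multiset.mem_add.mpr (Or.inr hx))
    have hcoeff := congrArg (PowerSeries.coeff m) h
    rw [map_add, map_smul, map_smul, coeff_prod_min A m hm0 hminA,
        coeff_prod_min B m hm0 hminB, PowerSeries.coeff_C] at hcoeff
    have hsum : 0 < A.count m + B.count m := by
      have := Multiset.count_pos.mpr hmmem
      rwa [Multiset.count_add] at this
    rw [heq, if_neg (show ¬ m = 0 by omega)] at hcoeff
    have : ((ε₁ : ℚ)) * (2 * (A.count m : ℚ) + 2 * (B.count m : ℚ)) = 0 := by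
      rw [smul_eq_mul, smul_eq_mul] at hcoeff
      linear_combination hcoeff
    have hε1 : (ε₁ : ℚ) ≠ 0 := by rcases hε₁ with h1 | h1 <;> simp [h1]
    have h2 : 2 * (A.count m : ℚ) + 2 * (B.count m : ℚ) = 0 := by
      rcases mul_eq_zero.mp this with h' | h'
      · exact absurd h' hε1
      · exact h'
    have hpos : (0 : ℚ) < 2 * (A.count m : ℚ) + 2 * (B.count m : ℚ) := by
      have : (0:ℚ) < (A.count m : ℚ) + (B.count m : ℚ) := by exact_mod_cast hsum
      linarith
    linarith
  -- now C = 0 from constant coefficient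
  have h0A : (PowerSeries.coeff 0) ((A.map g).prod) = 1 := by
    rw [PowerSeries.coeff_zero_eq_constantCoeff]; exact constantCoeff_prod A
  have h0B : (PowerSeries.coeff 0) ((B.map g).prod) = 1 := by
    rw [PowerSeries.coeff_zero_eq_constantCoeff]; exact constantCoeff_prod B
  have hcoeff0 := congrArg (PowerSeries.coeff 0) h
  rw [map_add, map_smul, map_smul, h0A, h0B, PowerSeries.coeff_C, hne] at hcoeff0
  have hC0 : C = 0 := by
    rw [if_pos rfl] at hcoeff0
    push_cast at hcoeff0
    rw [smul_eq_mul, smul_eq_mul] at hcoeff0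
    linarith [hcoeff0]
  -- and P_A = P_B
  have hε1 : (ε₁ : ℚ) ≠ 0 := by rcases hε₁ with h1 | h1 <;> simp [h1]
  have hPP : (A.map g).prod = (B.map g).prod := by
    rw [hne, hC0, map_zero] at h
    push_cast at h
    simp only [PowerSeries.smul_eq_C_mul, map_neg] at h
    have hmul : PowerSeries.C (ε₁ : ℚ) * ((A.map g).prod - (B.map g).prod) = 0 := by
      linear_combination h
    rcases mul_eq_zero.mp hmul with h'' | h''
    · exfalso
      apply hε1
      have := congrArg (PowerSeries.constantCoeff) h''
      simpa using this
    · exact sub_eq_zero.mp h''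
  exact ⟨hne, prod_g_inj A B hA hB hPP, hC0⟩
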